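/- In the setting of the previous statement, if additionally J satisfies the Palais–Smale condition on H and Z is closed and positively invariant under the negative gradient flow, then the infimum c = inf_Z J is attained at some v ∈ Z which is a critical point of J (∇J(v) = 0). -/

import Mathlib

open Filter

theorem stmt8 {H : Type*} [NormedAddCommGroup H] [InnerProductSpace ℝ H] [CompleteSpace H]
    (J : H → ℝ) (gradJ : H → H) (hgrad : ∀ u, HasGradientAt J (gradJ u) u)
    (φ : ℝ → H → H) (hφ0 : ∀ u, φ 0 u = u)
    (hφ' : ∀ (u : H) (t : ℝ), 0 ≤ t →
      HasDerivAt (fun s => φ s u) (-(gradJ (φ t u))) t)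
    (Z : Set H) (hZclosed : IsClosed Z) (hZne : Z.Nonempty)
    (hZinv : ∀ u ∈ Z, ∀ t : ℝ, 0 ≤ t → φ t u ∈ Z)
    (hbdd : BddBelow (J '' Z))
    (hPS : ∀ u : ℕ → H, (∃ C : ℝ, ∀ k, |J (u k)| ≤ C) →
      Tendsto (fun k => ‖gradJ (u k)‖) atTop (nhds 0) →
      ∃ (v : H) (σ : ℕ → ℕ), StrictMono σ ∧ Tendsto (u ∘ σ) atTop (nhds v)) :
    ∃ v ∈ Z, J v = sInf (J '' Z) ∧ gradJ v = 0 := by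
  set c := sInf (J '' Z) with hc
  have hle : ∀ u ∈ Z, c ≤ J u := fun u hu => csInf_le hbdd ⟨u, hu, rfl⟩
  -- derivative of J along the flow
  have hderiv : ∀ (u : H) (t : ℝ), 0 ≤ t →
      HasDerivAt (fun s => J (φ s u)) (-‖gradJ (φ t u)‖^2) t := by
    intro u t ht
    have h1 := (hgrad (φ t u)).hasFDerivAt.comp_hasDerivAt t (hφ' u t ht)
    refine h1.congr_deriv ?_
    simp [InnerProductSpace.toDual_apply_apply, real_inner_smul_right, inner_neg_right,
      real_inner_self_eq_norm_sq]
  -- J is nonincreasing along the flow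
  have hanti : ∀ u : H, AntitoneOn (fun s => J (φ s u)) (Set.Ici (0:ℝ)) := by
    intro u
    apply antitoneOn_of_deriv_nonpos (convex_Ici 0)
    · exact fun t ht => ((hderiv u t ht).continuousAt).continuousWithinAt
    · intro t ht
      rw [interior_Ici] at ht
      exact (hderiv u t ht.le).differentiableAt.differentiableWithinAt
    · intro t ht
      rw [interior_Ici] at ht
      rw [(hderiv u t ht.le).deriv]
      exact neg_nonpos.mpr (by positivity)
  -- construct a minimizing Palais-Smale sequence in Z
  have key : ∀ k : ℕ, ∃ w ∈ Z, c ≤ J w ∧ J w ≤ c + 1/(k+1) ∧ ‖gradJ w‖ ≤ 1/(k+1) := by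
    intro k
    have hpos : (0:ℝ) < 1/((k:ℝ)+1)^2 := by positivity
    obtain ⟨y, ⟨u, hu, rfl⟩, hy⟩ :
        ∃ y ∈ J '' Z, y < c + 1/((k:ℝ)+1)^2 := by
      apply exists_lt_of_csInf_lt (hZne.image J)
      linarith
    obtain ⟨ξ, hξ, hξeq⟩ := exists_hasDerivAt_eq_slope (fun s => J (φ s u))
      (fun t => -‖gradJ (φ t u)‖^2) (by norm_num : (0:ℝ) < 1)
      (fun t ht => ((hderiv u t ht.1).continuousAt).continuousWithinAt)
      (fun t ht => hderiv u t ht.1.le)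
    refine ⟨φ ξ u, hZinv u hu ξ hξ.1.le, hle _ (hZinv u hu ξ hξ.1.le), ?_, ?_⟩
    · have h1 : J (φ ξ u) ≤ J (φ 0 u) := hanti u Set.self_mem_Ici hξ.1.le hξ.1.le
      rw [hφ0] at h1
      have h2 : (1:ℝ)/((k:ℝ)+1)^2 ≤ 1/((k:ℝ)+1) := by
        rw [div_le_div_iff₀ (by positivity) (by positivity)]
        nlinarith [Nat.cast_nonneg (α := ℝ) k]
      linarith
    · have h2 : c ≤ J (φ 1 u) := hle _ (hZinv u hu 1 zero_le_one)
      rw [hφ0] at hξeq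
      simp only [sub_zero, div_one] at hξeq
      have h3 : ‖gradJ (φ ξ u)‖^2 ≤ 1/((k:ℝ)+1)^2 := by linarith [hle u hu]
      have h4 : ‖gradJ (φ ξ u)‖^2 ≤ (1/((k:ℝ)+1))^2 := by rwa [div_pow, one_pow]
      exact (pow_le_pow_iff_left₀ (norm_nonneg _) (by positivity) two_ne_zero).mp h4
  choose w hwZ hwc hwub hwgrad using key
  -- apply the PS condition
  obtain ⟨v, σ, hσ, hv⟩ := hPS w
    ⟨|c| + 1, fun k => by
      have h0 := hwc k; have h1 := hwub k
      have h2 : (1:ℝ)/((k:ℝ)+1) ≤ 1 := by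
        rw [div_le_one (by positivity)]; linarith [Nat.cast_nonneg (α := ℝ) k]
      rw [abs_le]; constructor
      · linarith [neg_abs_le c]
      · linarith [le_abs_self c]⟩
    (squeeze_zero (fun k => norm_nonneg _) hwgrad
      tendsto_one_div_add_atTop_nhds_zero_nat)
  have hvZ : v ∈ Z := hZclosed.mem_of_tendsto hv (Eventually.of_forall fun k => hwZ (σ k))
  have hJv : J v = c := by
    have h1 : Tendsto (fun k => J (w (σ k))) atTop (nhds (J v)) :=
      ((hgrad v).differentiableAt.continuousAt.tendsto).comp hv
    have h2 : Tendsto (fun k => J (w (σ k))) atTop (nhds c) := by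
      have hub : Tendsto (fun k : ℕ => c + 1/((k:ℝ)+1)) atTop (nhds c) := by
        simpa using (tendsto_const_nhds (x := c)).add tendsto_one_div_add_atTop_nhds_zero_nat
      refine tendsto_of_tendsto_of_tendsto_of_le_of_le
        (tendsto_const_nhds : Tendsto (fun _ : ℕ => c) atTop (nhds c)) hub
        (fun k => hwc (σ k)) (fun k => le_trans (hwub (σ k)) ?_)
      gcongr
      exact_mod_cast hσ.id_le k
    exact tendsto_nhds_unique h1 h2
  refine ⟨v, hvZ, hJv, ?_⟩
  -- criticality: the flow from v cannot decrease J below c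
  have hge : ∀ t ∈ Set.Ioi (0:ℝ), 0 ≤ slope (fun s => J (φ s v)) 0 t := by
    intro t ht
    have ht0 : 0 < t := ht
    have ht1 : (0:ℝ) ≤ t := le_of_lt ht
    rw [slope_def_field]
    have hJt : c ≤ J (φ t v) := hle _ (hZinv v hvZ t ht1)
    rw [hφ0, hJv]
    rw [div_eq_mul_inv]
    apply mul_nonneg (by linarith)
    simp [ht0.le]
  have hd : HasDerivWithinAt (fun s => J (φ s v)) (-‖gradJ (φ 0 v)‖^2) (Set.Ici 0) 0 :=
    (hderiv v 0 le_rfl).hasDerivWithinAt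
  rw [hasDerivWithinAt_iff_tendsto_slope, show Set.Ici (0:ℝ) \ {0} = Set.Ioi 0 from by
    ext x
    simp only [Set.mem_diff, Set.mem_Ici, Set.mem_singleton_iff, Set.mem_Ioi]
    constructor
    · intro h; exact lt_of_le_of_ne h.1 (Ne.symm h.2)
    · intro h; exact ⟨h.le, h.ne'⟩] at hd
  have h0 : 0 ≤ -‖gradJ (φ 0 v)‖^2 := by
    refine ge_of_tendsto hd ?_
    filter_upwards [self_mem_nhdsWithin] with t ht using hge t ht
  rw [hφ0] at h0
  have : ‖gradJ v‖ = 0 := by nlinarith [sq_nonneg ‖gradJ v‖, norm_nonneg (gradJ v)]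
  exact norm_eq_zero.mp this
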